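/- Let f be positive and Riemann integrable on [0,1] with ln∘f Riemann integrable. Then lim_{n→∞} (f((⌊n^{8/9}⌋+1)/n)·f((⌊n^{8/9}⌋+2)/n)⋯f(n/n))^{1/n} = exp(∫_0^1 ln f(x) dx). -/

import Mathlib

open Filter Finset Real

/-- `f` is Riemann integrable on `[a,b]` with Riemann integral `I`:
for every `ε > 0` there is `δ > 0` such that every tagged partition
`a = x 0 < x 1 < … < x n = b` with mesh `< δ` and tags `ξ k ∈ [x (k-1), x k]`
has Riemann sum within `ε` of `I`. -/
def IsRiemannIntegral (f : ℝ → ℝ) (a b I : ℝ) : Prop :=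
  ∀ ε > 0, ∃ δ > 0, ∀ (n : ℕ) (x ξ : ℕ → ℝ),
    0 < n → x 0 = a → x n = b →
    (∀ k ∈ Finset.Icc 1 n, x (k - 1) < x k) →
    (∀ k ∈ Finset.Icc 1 n, x k - x (k - 1) < δ) →
    (∀ k ∈ Finset.Icc 1 n, ξ k ∈ Set.Icc (x (k - 1)) (x k)) →
    |(∑ k ∈ Finset.Icc 1 n, f (ξ k) * (x k - x (k - 1))) - I| < ε

lemma unifP (n : ℕ) (hn : 0 < n) :
    ((0:ℕ):ℝ)/n = 0 ∧ ((n:ℕ):ℝ)/n = 1 ∧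
    (∀ k ∈ Finset.Icc 1 n, ((k-1:ℕ):ℝ)/n < (k:ℝ)/n) ∧
    (∀ k ∈ Finset.Icc 1 n, (k:ℝ)/n - ((k-1:ℕ):ℝ)/n = 1/n) := by
  have hnR : (0:ℝ) < n := Nat.cast_pos.2 hn
  have hc : ∀ k ∈ Finset.Icc 1 n, ((k-1:ℕ):ℝ) = (k:ℝ) - 1 := by
    intro k hk
    have h1 := (Finset.mem_Icc.1 hk).1
    push_cast [Nat.cast_sub h1]
    ring
  refine ⟨by simp, div_self hnR.ne', ?_, ?_⟩
  · intro k hk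
    rw [hc k hk, div_lt_div_iff_of_pos_right hnR]
    linarith
  · intro k hk
    rw [hc k hk]
    field_simp
    ring

lemma riemann_bounded (g : ℝ → ℝ) (L : ℝ) (h : IsRiemannIntegral g 0 1 L) :
    ∃ M : ℝ, 0 ≤ M ∧ ∀ y ∈ Set.Icc (0:ℝ) 1, |g y| ≤ M := by
  obtain ⟨δ, hδ, H⟩ := h 1 one_pos
  obtain ⟨n, hn⟩ := exists_nat_gt (1/δ)
  have hn1 : 0 < n := by
    have : (0:ℝ) < n := lt_trans (one_div_pos.2 hδ) hn
    exact_mod_cast this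
  have hnR : (0:ℝ) < n := Nat.cast_pos.2 hn1
  have h1n : (1:ℝ)/n < δ := by
    rw [div_lt_iff₀ hnR]
    calc (1:ℝ) = δ * (1/δ) := by field_simp
    _ < δ * n := by exact mul_lt_mul_of_pos_left hn hδ
  obtain ⟨hx0, hxn, hlt, hmesh⟩ := unifP n hn1
  set x : ℕ → ℝ := fun k => (k:ℝ)/n with hxdef
  have Hx := H n x x hn1 hx0 hxn hlt
    (fun k hk => by rw [hmesh k hk]; exact h1n)
    (fun k hk => ⟨(hlt k hk).le, le_refl _⟩)
  refine ⟨2 * n + ∑ k ∈ Finset.Icc 1 n, |g (x k)|, by positivity, ?_⟩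
  intro y hy
  obtain ⟨hy0, hy1⟩ := hy
  set j : ℕ := max 1 ⌈(n:ℝ)*y⌉₊ with hjdef
  have hj1 : 1 ≤ j := le_max_left _ _
  have hjn : j ≤ n := by
    refine max_le hn1 (Nat.ceil_le.2 ?_)
    calc (n:ℝ)*y ≤ n*1 := by nlinarith
    _ = n := mul_one _
  have hjmem : j ∈ Finset.Icc 1 n := Finset.mem_Icc.2 ⟨hj1, hjn⟩
  have hyle : y ≤ x j := by
    rw [hxdef]
    rw [le_div_iff₀ hnR]
    calc y * n = n * y := mul_comm _ _
    _ ≤ ⌈(n:ℝ)*y⌉₊ := Nat.le_ceil _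
    _ ≤ j := by exact_mod_cast Nat.cast_le.2 (le_max_right _ _)
  have hyge : x (j-1) ≤ y := by
    have hcast : ((j-1:ℕ):ℝ) = (j:ℝ) - 1 := by
      push_cast [Nat.cast_sub hj1]; ring
    rw [hxdef]
    simp only [hcast]
    rw [div_le_iff₀ hnR]
    rcases Nat.eq_zero_or_pos ⌈(n:ℝ)*y⌉₊ with h0 | h1
    · have : j = 1 := by rw [hjdef, h0]; rfl
      rw [this]
      push_cast
      nlinarith
    · have hje : j = ⌈(n:ℝ)*y⌉₊ := max_eq_right h1
      have : ((j - 1 : ℕ):ℝ) < (n:ℝ)*y := by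
        rw [← Nat.lt_ceil, ← hje]
        omega
      rw [hcast] at this
      nlinarith [mul_comm y (n:ℝ)]
  set ξ2 : ℕ → ℝ := fun k => if k = j then y else x k with hξ2
  have Hy := H n x ξ2 hn1 hx0 hxn hlt
    (fun k hk => by rw [hmesh k hk]; exact h1n)
    (fun k hk => by
      by_cases hkj : k = j
      · subst hkj
        simp only [hξ2, if_pos rfl]
        exact ⟨hyge, hyle⟩
      · simp only [hξ2, if_neg hkj]
        exact ⟨(hlt k hk).le, le_refl _⟩)
  have hdiff : (∑ k ∈ Finset.Icc 1 n, g (ξ2 k) * (x k - x (k-1)))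
      - (∑ k ∈ Finset.Icc 1 n, g (x k) * (x k - x (k-1)))
      = (g y - g (x j)) * (1/n) := by
    rw [← Finset.sum_sub_distrib]
    rw [Finset.sum_eq_single_of_mem j hjmem]
    · simp only [hξ2, if_pos rfl]
      rw [hmesh j hjmem]
      ring
    · intro k hk hkj
      simp only [hξ2, if_neg hkj]
      ring
  have h2 : |g y - g (x j)| * (1/n) < 2 := by
    calc |g y - g (x j)| * (1/n) = |(g y - g (x j)) * (1/n)| := by
          rw [abs_mul, abs_of_pos (one_div_pos.2 hnR)]
    _ = |(∑ k ∈ Finset.Icc 1 n, g (ξ2 k) * (x k - x (k-1)))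
      - (∑ k ∈ Finset.Icc 1 n, g (x k) * (x k - x (k-1)))| := by rw [hdiff]
    _ < 2 := by
        have e : (∑ k ∈ Finset.Icc 1 n, g (ξ2 k) * (x k - x (k-1)))
            - (∑ k ∈ Finset.Icc 1 n, g (x k) * (x k - x (k-1)))
            = ((∑ k ∈ Finset.Icc 1 n, g (ξ2 k) * (x k - x (k-1))) - L)
            - ((∑ k ∈ Finset.Icc 1 n, g (x k) * (x k - x (k-1))) - L) := by ring
        rw [e]
        calc _ ≤ |(∑ k ∈ Finset.Icc 1 n, g (ξ2 k) * (x k - x (k-1))) - L|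
              + |(∑ k ∈ Finset.Icc 1 n, g (x k) * (x k - x (k-1))) - L| := abs_sub _ _
        _ < 2 := by linarith [Hy, Hx]
  have hsingle : |g (x j)| ≤ ∑ k ∈ Finset.Icc 1 n, |g (x k)| :=
    Finset.single_le_sum (f := fun k => |g (x k)|) (fun k _ => abs_nonneg _) hjmem
  have h3 : |g y - g (x j)| < 2 * n := by
    have hpos : (0:ℝ) < 1/n := one_div_pos.2 hnR
    have hone : (n:ℝ) * (1/n) = 1 := by field_simp
    nlinarith [h2, abs_nonneg (g y - g (x j))]
  calc |g y| ≤ |g (x j)| + |g y - g (x j)| := by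
        have := abs_sub_abs_le_abs_sub (g y) (g (x j))
        linarith
  _ ≤ 2 * n + ∑ k ∈ Finset.Icc 1 n, |g (x k)| := by linarith

lemma riemann_sum_tendsto (g : ℝ → ℝ) (L : ℝ) (h : IsRiemannIntegral g 0 1 L) :
    Tendsto (fun n : ℕ => (1/(n:ℝ)) * ∑ k ∈ Finset.Icc 1 n, g ((k:ℝ)/n)) atTop (nhds L) := by
  rw [Metric.tendsto_atTop]
  intro ε hε
  obtain ⟨δ, hδ, H⟩ := h ε hε
  obtain ⟨N, hN⟩ := exists_nat_gt (1/δ)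
  refine ⟨N+1, fun n hn => ?_⟩
  have hn1 : 0 < n := lt_of_lt_of_le (Nat.succ_pos N) hn
  have hnR : (0:ℝ) < n := Nat.cast_pos.2 hn1
  have h1n : (1:ℝ)/n < δ := by
    rw [div_lt_iff₀ hnR]
    have hNn : (1:ℝ)/δ < n := lt_of_lt_of_le hN (by exact_mod_cast le_trans (Nat.le_succ N) hn)
    calc (1:ℝ) = δ * (1/δ) := by field_simp
    _ < δ * n := mul_lt_mul_of_pos_left hNn hδ
  obtain ⟨hx0, hxn, hlt, hmesh⟩ := unifP n hn1
  have Hx := H n (fun k => (k:ℝ)/n) (fun k => (k:ℝ)/n) hn1 hx0 hxn hlt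
    (fun k hk => by rw [hmesh k hk]; exact h1n)
    (fun k hk => ⟨(hlt k hk).le, le_refl _⟩)
  rw [Real.dist_eq]
  have e : (1/(n:ℝ)) * ∑ k ∈ Finset.Icc 1 n, g ((k:ℝ)/n)
      = ∑ k ∈ Finset.Icc 1 n, g ((k:ℝ)/n) * ((k:ℝ)/n - ((k-1:ℕ):ℝ)/n) := by
    rw [Finset.mul_sum]
    refine Finset.sum_congr rfl fun k hk => ?_
    rw [hmesh k hk]
    ring
  rw [e]
  exact Hx

theorem geometric_mean_limit_deleted (f : ℝ → ℝ) (I L : ℝ)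
    (hpos : ∀ x ∈ Set.Icc (0 : ℝ) 1, 0 < f x)
    (hf : IsRiemannIntegral f 0 1 I)
    (hlog : IsRiemannIntegral (fun x => Real.log (f x)) 0 1 L) :
    Tendsto (fun n : ℕ =>
      (∏ k ∈ Finset.Icc (⌊(n : ℝ) ^ ((8 : ℝ) / 9)⌋₊ + 1) n, f ((k : ℝ) / n)) ^ ((1 : ℝ) / n))
      atTop (nhds (Real.exp L)) := by
  set g : ℝ → ℝ := fun x => Real.log (f x) with hgdef
  obtain ⟨M, hM0, hM⟩ := riemann_bounded g L hlog
  have hS := riemann_sum_tendsto g L hlog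
  set m : ℕ → ℕ := fun n => ⌊(n:ℝ) ^ ((8:ℝ)/9)⌋₊ with hmdef
  have hmn : ∀ n : ℕ, 1 ≤ n → m n ≤ n := by
    intro n hn
    have h1 : (1:ℝ) ≤ n := by exact_mod_cast hn
    have : (n:ℝ) ^ ((8:ℝ)/9) ≤ (n:ℝ) ^ (1:ℝ) :=
      Real.rpow_le_rpow_of_exponent_le h1 (by norm_num)
    rw [Real.rpow_one] at this
    calc m n ≤ ⌊(n:ℝ)⌋₊ := Nat.floor_le_floor this
    _ = n := Nat.floor_natCast n
  have hmem : ∀ n : ℕ, 1 ≤ n → ∀ k ∈ Finset.Icc 1 n, ((k:ℝ)/n) ∈ Set.Icc (0:ℝ) 1 := by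
    intro n hn k hk
    obtain ⟨hk1, hk2⟩ := Finset.mem_Icc.1 hk
    have hnR : (0:ℝ) < n := Nat.cast_pos.2 hn
    constructor
    · positivity
    · rw [div_le_one hnR]; exact_mod_cast hk2
  -- deleted part tends to 0
  have hD : Tendsto (fun n : ℕ => (1/(n:ℝ)) * ∑ k ∈ Finset.Icc 1 (m n), g ((k:ℝ)/n))
      atTop (nhds 0) := by
    have hC : Tendsto (fun n : ℕ => M * (n:ℝ) ^ (-(1:ℝ)/9)) atTop (nhds 0) := by
      have h1 : Tendsto (fun x : ℝ => x ^ (-(1:ℝ)/9)) atTop (nhds 0) := by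
        have := tendsto_rpow_neg_atTop (y := (1:ℝ)/9) (by norm_num)
        simpa [neg_div] using this
      have := (h1.comp tendsto_natCast_atTop_atTop).const_mul M
      simpa using this
    refine squeeze_zero_norm' ?_ hC
    filter_upwards [eventually_ge_atTop 1] with n hn
    have hnR : (0:ℝ) < n := Nat.cast_pos.2 hn
    have hmle : (m n : ℝ) ≤ (n:ℝ) ^ ((8:ℝ)/9) := Nat.floor_le (by positivity)
    have hsum : |∑ k ∈ Finset.Icc 1 (m n), g ((k:ℝ)/n)| ≤ (m n) * M := by
      calc |∑ k ∈ Finset.Icc 1 (m n), g ((k:ℝ)/n)|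
          ≤ ∑ k ∈ Finset.Icc 1 (m n), |g ((k:ℝ)/n)| := Finset.abs_sum_le_sum_abs _ _
      _ ≤ ∑ k ∈ Finset.Icc 1 (m n), M := by
          refine Finset.sum_le_sum fun k hk => ?_
          refine hM _ (hmem n hn k ?_)
          obtain ⟨hk1, hk2⟩ := Finset.mem_Icc.1 hk
          exact Finset.mem_Icc.2 ⟨hk1, le_trans hk2 (hmn n hn)⟩
      _ = (m n) * M := by rw [Finset.sum_const, Nat.card_Icc]; simp [nsmul_eq_mul]
    have hrw : (n:ℝ) ^ (-(1:ℝ)/9) = (n:ℝ) ^ ((8:ℝ)/9) / n := by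
      rw [show (-(1:ℝ)/9) = (8:ℝ)/9 - 1 from by norm_num, Real.rpow_sub hnR, Real.rpow_one]
    rw [hrw]
    calc ‖(1/(n:ℝ)) * ∑ k ∈ Finset.Icc 1 (m n), g ((k:ℝ)/n)‖
        = (1/(n:ℝ)) * |∑ k ∈ Finset.Icc 1 (m n), g ((k:ℝ)/n)| := by
          rw [Real.norm_eq_abs, abs_mul, abs_of_pos (one_div_pos.2 hnR)]
    _ ≤ (1/(n:ℝ)) * ((m n) * M) := by
          exact mul_le_mul_of_nonneg_left hsum (le_of_lt (one_div_pos.2 hnR))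
    _ ≤ (1/(n:ℝ)) * ((n:ℝ) ^ ((8:ℝ)/9) * M) := by
          refine mul_le_mul_of_nonneg_left ?_ (le_of_lt (one_div_pos.2 hnR))
          exact mul_le_mul_of_nonneg_right hmle hM0
    _ = M * ((n:ℝ) ^ ((8:ℝ)/9) / n) := by ring
  -- deleted riemann sum tends to L
  have ha : Tendsto (fun n : ℕ => (1/(n:ℝ)) * ∑ k ∈ Finset.Icc (m n + 1) n, g ((k:ℝ)/n))
      atTop (nhds L) := by
    have h0 := hS.sub hD
    rw [sub_zero] at h0
    refine h0.congr' ?_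
    filter_upwards [eventually_ge_atTop 1] with n hn
    rw [← mul_sub]
    congr 1
    have e1 : Finset.Icc 1 n = Finset.Ioc 0 n := rfl
    have e2 : Finset.Icc 1 (m n) = Finset.Ioc 0 (m n) := rfl
    have e3 : Finset.Icc (m n + 1) n = Finset.Ioc (m n) n := Finset.Icc_add_one_left_eq_Ioc _ _
    rw [e1, e2, e3, sub_eq_iff_eq_add, add_comm]
    exact (Finset.sum_Ioc_consecutive _ (Nat.zero_le _) (hmn n hn)).symm
  have key : Tendsto (fun n : ℕ =>
      Real.exp ((1/(n:ℝ)) * ∑ k ∈ Finset.Icc (m n + 1) n, g ((k:ℝ)/n)))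
      atTop (nhds (Real.exp L)) := (Real.continuous_exp.tendsto L).comp ha
  refine key.congr' ?_
  filter_upwards [eventually_ge_atTop 1] with n hn
  have hnR : (0:ℝ) < n := Nat.cast_pos.2 hn
  have hmem' : ∀ k ∈ Finset.Icc (m n + 1) n, ((k:ℝ)/n) ∈ Set.Icc (0:ℝ) 1 := by
    intro k hk
    obtain ⟨hk1, hk2⟩ := Finset.mem_Icc.1 hk
    exact hmem n hn k (Finset.mem_Icc.2 ⟨le_trans (Nat.le_add_left 1 (m n)) hk1, hk2⟩)
  have hppos : 0 < ∏ k ∈ Finset.Icc (m n + 1) n, f ((k:ℝ)/n) :=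
    Finset.prod_pos fun k hk => hpos _ (hmem' k hk)
  rw [Real.rpow_def_of_pos hppos]
  congr 1
  rw [Real.log_prod fun k hk => (hpos _ (hmem' k hk)).ne']
  ring
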